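/- Let Θ ⊆ ℝ^m be convex and let d : Θ × {0,1} → ℝ be such that d₀ := d(·,0) and d₁ := d(·,1) are convex. Define Ψ(θ, y) := inf over θ⁰, θ¹ ∈ Θ with (1−y)θ⁰ + yθ¹ = θ of (1−y)d₀(θ⁰) + y d₁(θ¹), for y ∈ (0,1). Then the function d** on Θ × [0,1] defined by d**(θ,y) = d(θ,y) if y ∈ {0,1} and d**(θ,y) = Ψ(θ,y) if y ∈ (0,1) is convex. -/
import Mathlib


open Set

section aux
variable {E : Type*} [NormedAddCommGroup E] [NormedSpace ℝ E]

def infSet (Θ : Set E) (d₀ d₁ : E → ℝ) (θ : E) (y : ℝ) : Set ℝ :=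
  {v : ℝ | ∃ θ0 ∈ Θ, ∃ θ1 ∈ Θ, (1 - y) • θ0 + y • θ1 = θ ∧ v = (1 - y) * d₀ θ0 + y * d₁ θ1}

variable {Θ : Set E} {d₀ d₁ : E → ℝ}

lemma infSet_nonempty {θ : E} (hθ : θ ∈ Θ) (y : ℝ) : (infSet Θ d₀ d₁ θ y).Nonempty := by
  refine ⟨(1-y)*d₀ θ + y*d₁ θ, θ, hθ, θ, hθ, ?_, rfl⟩
  module

lemma infSet_bddBelow (h0 : ∀ θ ∈ Θ, 0 ≤ d₀ θ) (h1 : ∀ θ ∈ Θ, 0 ≤ d₁ θ)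
    {y : ℝ} (hy : y ∈ Icc (0:ℝ) 1) (θ : E) : BddBelow (infSet Θ d₀ d₁ θ y) := by
  refine ⟨0, fun v hv => ?_⟩
  obtain ⟨θ0, hθ0, θ1, hθ1, -, rfl⟩ := hv
  have := h0 θ0 hθ0; have := h1 θ1 hθ1
  nlinarith [hy.1, hy.2]

lemma infSet_zero {θ : E} (hθ : θ ∈ Θ) : infSet Θ d₀ d₁ θ 0 = {d₀ θ} := by
  ext v
  constructor
  · rintro ⟨θ0, hθ0, θ1, hθ1, hc, rfl⟩
    simp only [sub_zero, one_smul, zero_smul, add_zero] at hc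
    subst hc
    simp
  · rintro rfl
    exact ⟨θ, hθ, θ, hθ, by module, by simp⟩

lemma infSet_one {θ : E} (hθ : θ ∈ Θ) : infSet Θ d₀ d₁ θ 1 = {d₁ θ} := by
  ext v
  constructor
  · rintro ⟨θ0, hθ0, θ1, hθ1, hc, rfl⟩
    simp only [sub_self, zero_smul, one_smul, zero_add] at hc
    subst hc
    simp
  · rintro rfl
    exact ⟨θ, hθ, θ, hθ, by module, by simp⟩

lemma combine_aux (hΘ : Convex ℝ Θ) {f : E → ℝ} (hf : ConvexOn ℝ Θ f)
    {x x' : E} (hx : x ∈ Θ) (hx' : x' ∈ Θ) {c c' : ℝ} (hc : 0 ≤ c) (hc' : 0 ≤ c') :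
    ∃ z ∈ Θ, (c + c') • z = c • x + c' • x' ∧ (c + c') * f z ≤ c * f x + c' * f x' := by
  rcases eq_or_lt_of_le (add_nonneg hc hc') with h | h
  · have hc0 : c = 0 := by linarith
    have hc'0 : c' = 0 := by linarith
    exact ⟨x, hx, by simp [hc0, hc'0], by simp [hc0, hc'0]⟩
  · have hne : c + c' ≠ 0 := ne_of_gt h
    have hs : c/(c+c') + c'/(c+c') = 1 := by field_simp
    refine ⟨(c/(c+c')) • x + (c'/(c+c')) • x',
      hΘ hx hx' (by positivity) (by positivity) hs, ?_, ?_⟩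
    · rw [smul_add, smul_smul, smul_smul, mul_div_cancel₀ _ hne, mul_div_cancel₀ _ hne]
    · have hbnd := hf.2 hx hx' (by positivity : (0:ℝ) ≤ c/(c+c'))
        (by positivity : (0:ℝ) ≤ c'/(c+c')) hs
      have hm := mul_le_mul_of_nonneg_left hbnd (le_of_lt h)
      calc (c + c') * f ((c/(c+c')) • x + (c'/(c+c')) • x')
          ≤ (c + c') * (c/(c+c') * f x + c'/(c+c') * f x') := hm
        _ = c * f x + c' * f x' := by field_simp

lemma key_ineq (hΘ : Convex ℝ Θ) (hd₀ : ConvexOn ℝ Θ d₀) (hd₁ : ConvexOn ℝ Θ d₁)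
    (h0 : ∀ θ ∈ Θ, 0 ≤ d₀ θ) (h1 : ∀ θ ∈ Θ, 0 ≤ d₁ θ)
    {θ θ' : E} (hθ : θ ∈ Θ) (hθ' : θ' ∈ Θ)
    {y y' : ℝ} (hy : y ∈ Icc (0:ℝ) 1) (hy' : y' ∈ Icc (0:ℝ) 1)
    {a b : ℝ} (ha : 0 ≤ a) (hb : 0 ≤ b) (hab : a + b = 1) :
    sInf (infSet Θ d₀ d₁ (a • θ + b • θ') (a * y + b * y')) ≤
      a * sInf (infSet Θ d₀ d₁ θ y) + b * sInf (infSet Θ d₀ d₁ θ' y') := by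
  have hyc : a * y + b * y' ∈ Icc (0:ℝ) 1 := by
    constructor
    · exact add_nonneg (mul_nonneg ha hy.1) (mul_nonneg hb hy'.1)
    · nlinarith [hy.2, hy'.2]
  have hmem : ∀ v ∈ infSet Θ d₀ d₁ θ y, ∀ v' ∈ infSet Θ d₀ d₁ θ' y',
      sInf (infSet Θ d₀ d₁ (a • θ + b • θ') (a * y + b * y')) ≤ a * v + b * v' := by
    rintro v ⟨θ0, hθ0, θ1, hθ1, hc, rfl⟩ v' ⟨θ0', hθ0', θ1', hθ1', hc', rfl⟩
    have hsum0 : a * (1 - y) + b * (1 - y') = 1 - (a * y + b * y') := by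
      have h : a * (1 - y) + b * (1 - y') = (a + b) - (a * y + b * y') := by ring
      rw [h, hab]
    have hn1 : (0:ℝ) ≤ a * (1 - y) := mul_nonneg ha (by linarith [hy.2])
    have hn2 : (0:ℝ) ≤ b * (1 - y') := mul_nonneg hb (by linarith [hy'.2])
    have hn3 : (0:ℝ) ≤ a * y := mul_nonneg ha hy.1
    have hn4 : (0:ℝ) ≤ b * y' := mul_nonneg hb hy'.1
    obtain ⟨z0, hz0, hz0e, hz0le⟩ := combine_aux hΘ hd₀ hθ0 hθ0' hn1 hn2
    obtain ⟨z1, hz1, hz1e, hz1le⟩ := combine_aux hΘ hd₁ hθ1 hθ1' hn3 hn4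
    have hconstr : (1 - (a * y + b * y')) • z0 + (a * y + b * y') • z1
        = a • θ + b • θ' := by
      rw [← hsum0, hz0e, hz1e, ← hc, ← hc']
      module
    have hw : (1 - (a * y + b * y')) * d₀ z0 + (a * y + b * y') * d₁ z1
        ∈ infSet Θ d₀ d₁ (a • θ + b • θ') (a * y + b * y') :=
      ⟨z0, hz0, z1, hz1, hconstr, rfl⟩
    refine le_trans (csInf_le (infSet_bddBelow h0 h1 hyc _) hw) ?_
    rw [← hsum0] at *
    nlinarith [hz0le, hz1le]
  refine le_of_forall_pos_le_add ?_
  intro ε hε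
  obtain ⟨v, hv, hvlt⟩ := Real.lt_sInf_add_pos (infSet_nonempty hθ y) (half_pos hε)
  obtain ⟨v', hv', hvlt'⟩ := Real.lt_sInf_add_pos (infSet_nonempty hθ' y') (half_pos hε)
  refine le_trans (hmem v hv v' hv') ?_
  have h1' := mul_le_mul_of_nonneg_left (le_of_lt hvlt) ha
  have h2' := mul_le_mul_of_nonneg_left (le_of_lt hvlt') hb
  nlinarith [h1', h2']

end aux

/-- the piecewise function built from `d₀, d₁` on the boundary and the
weighted infimal convolution `Ψ` in the interior is convex on `Θ × [0,1]`. -/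
theorem biconjugate_extension_convex
    (m : ℕ) (Θ : Set (EuclideanSpace ℝ (Fin m))) (hΘ : Convex ℝ Θ)
    (d₀ d₁ : EuclideanSpace ℝ (Fin m) → ℝ)
    (hd₀ : ConvexOn ℝ Θ d₀) (hd₁ : ConvexOn ℝ Θ d₁)
    (hd₀0 : ∀ θ ∈ Θ, 0 ≤ d₀ θ) (hd₁0 : ∀ θ ∈ Θ, 0 ≤ d₁ θ)
    (Ψ : EuclideanSpace ℝ (Fin m) → ℝ → ℝ)
    (hΨ : ∀ θ ∈ Θ, ∀ y ∈ Ioo (0:ℝ) 1,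
      Ψ θ y = sInf {v : ℝ | ∃ θ0 ∈ Θ, ∃ θ1 ∈ Θ,
        (1 - y) • θ0 + y • θ1 = θ ∧ v = (1 - y) * d₀ θ0 + y * d₁ θ1})
    (dstar : EuclideanSpace ℝ (Fin m) → ℝ → ℝ)
    (hb0 : ∀ θ ∈ Θ, dstar θ 0 = d₀ θ)
    (hb1 : ∀ θ ∈ Θ, dstar θ 1 = d₁ θ)
    (hmid : ∀ θ ∈ Θ, ∀ y ∈ Ioo (0:ℝ) 1, dstar θ y = Ψ θ y) :
    ConvexOn ℝ (Θ ×ˢ Icc (0:ℝ) 1) (fun p => dstar p.1 p.2) := by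
  have hFd : ∀ θ ∈ Θ, ∀ y ∈ Icc (0:ℝ) 1, dstar θ y = sInf (infSet Θ d₀ d₁ θ y) := by
    intro θ hθ y hy
    rcases eq_or_lt_of_le hy.1 with h0 | h0
    · rw [← h0, hb0 θ hθ, infSet_zero hθ, csInf_singleton]
    rcases eq_or_lt_of_le hy.2 with h1 | h1
    · rw [h1, hb1 θ hθ, infSet_one hθ, csInf_singleton]
    · rw [hmid θ hθ y ⟨h0, h1⟩, hΨ θ hθ y ⟨h0, h1⟩]
      rfl
  refine ⟨hΘ.prod (convex_Icc 0 1), ?_⟩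
  rintro ⟨θ, y⟩ hp ⟨θ', y'⟩ hq a b ha hb hab
  simp only [mem_prod] at hp hq
  have hycomb : a * y + b * y' ∈ Icc (0:ℝ) 1 :=
    (convex_Icc (0:ℝ) 1) hp.2 hq.2 ha hb hab
  have hθcomb : a • θ + b • θ' ∈ Θ := hΘ hp.1 hq.1 ha hb hab
  simp only [Prod.smul_mk, Prod.mk_add_mk, smul_eq_mul]
  rw [hFd θ hp.1 y hp.2, hFd θ' hq.1 y' hq.2, hFd _ hθcomb _ hycomb]
  exact key_ineq hΘ hd₀ hd₁ hd₀0 hd₁0 hp.1 hq.1 hp.2 hq.2 ha hb hab
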